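/- For any graph G, the chromatic number of its Federico graph equals the chromatic number of G: χ(F(G)) = χ(G). -/

import Mathlib

open SimpleGraph

/-- A proper colouring with `k` colours. -/
def IsProperCol {V : Type*} (G : SimpleGraph V) {k : ℕ} (c : V → Fin k) : Prop :=
  ∀ ⦃x y⦄, G.Adj x y → c x ≠ c y

/-- Every vertex belongs to a rainbow neighbourhood: its closed neighbourhood
meets every colour class. -/
def IsRainbowCol {V : Type*} (G : SimpleGraph V) {k : ℕ} (c : V → Fin k) : Prop :=
  ∀ v (i : Fin k), ∃ u, (u = v ∨ G.Adj v u) ∧ c u = i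

/-- `G` admits a J-colouring. -/
def JColorable {V : Type*} (G : SimpleGraph V) : Prop :=
  ∃ (k : ℕ) (c : V → Fin k), IsProperCol G c ∧ IsRainbowCol G c

/-- The J-colouring number of `G` is `k`: there is a proper rainbow colouring with `k`
colours, and `k` is maximal with this property. -/
def JNum {V : Type*} (G : SimpleGraph V) (k : ℕ) : Prop :=
  (∃ c : V → Fin k, IsProperCol G c ∧ IsRainbowCol G c) ∧
    ∀ m, (∃ c : V → Fin m, IsProperCol G c ∧ IsRainbowCol G c) → m ≤ k

/-- The Mycielskian of `G`: vertices `Sum.inl i = vᵢ`, `Sum.inr (Sum.inl i) = uᵢ`,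
`Sum.inr (Sum.inr ()) = w`. -/
def mycielskian {V : Type*} (G : SimpleGraph V) : SimpleGraph (V ⊕ V ⊕ Unit) :=
  SimpleGraph.fromRel (fun a b => match a, b with
    | Sum.inl i, Sum.inl j => G.Adj i j
    | Sum.inl i, Sum.inr (Sum.inl j) => G.Adj i j
    | Sum.inr (Sum.inl _), Sum.inr (Sum.inr _) => True
    | _, _ => False)

/-- The Federico graph of `G`: vertices `Sum.inl i = vᵢ`, `Sum.inr (Sum.inl i) = uᵢ`,
`Sum.inr (Sum.inr i) = wᵢ`; edges `vᵢvⱼ`, `wᵢwⱼ`, `uᵢwⱼ` whenever `vᵢvⱼ ∈ E(G)`,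
plus `vᵢuᵢ` for each `i`. -/
def federico {V : Type*} (G : SimpleGraph V) : SimpleGraph (V ⊕ V ⊕ V) :=
  SimpleGraph.fromRel (fun a b => match a, b with
    | Sum.inl i, Sum.inl j => G.Adj i j
    | Sum.inr (Sum.inr i), Sum.inr (Sum.inr j) => G.Adj i j
    | Sum.inr (Sum.inl i), Sum.inr (Sum.inr j) => G.Adj i j
    | Sum.inl i, Sum.inr (Sum.inl j) => i = j
    | _, _ => False)

/-- The chromatic number of the Federico graph equals that of `G`
(`G` a connected graph on at least two vertices, as assumed throughout the paper). -/

private lemma federico_aux_colorable {V : Type*} {G : SimpleGraph V} {n : ℕ}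
    (hxy : ∃ x y, G.Adj x y) (h : G.Colorable n) : (federico G).Colorable n := by
  obtain ⟨c⟩ := h
  obtain ⟨x, y, hxy⟩ := hxy
  have hn2 : 2 ≤ n := by
    have h1 : c x ≠ c y := c.valid hxy
    have hnt : Nontrivial (Fin n) := ⟨c x, c y, h1⟩
    have := Fintype.one_lt_card (α := Fin n)
    simp at this; omega
  haveI : NeZero n := ⟨by omega⟩
  have hone : ∀ a : Fin n, a + 1 ≠ a := by
    intro a h
    have : (1 : Fin n) = 0 := by
      have := congrArg (· - a) h
      simpa [add_comm, add_sub_cancel_right] using this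
    have := Fin.val_eq_of_eq this
    simp [Fin.val_one, Nat.mod_eq_of_lt (show 1 < n by omega)] at this
  refine ⟨SimpleGraph.Coloring.mk
    (fun a => match a with
      | Sum.inl i => c i + 1
      | Sum.inr (Sum.inl i) => c i
      | Sum.inr (Sum.inr i) => c i) ?_⟩
  rintro (i | i | i) (j | j | j) hadj <;>
    simp only [federico, SimpleGraph.fromRel_adj, ne_eq] at hadj <;>
    obtain ⟨hne, hrel⟩ := hadj <;>
    simp only [] at hrel ⊢
  · have hij : G.Adj i j := by tauto
    have := c.valid hij
    intro h; exact this (by simpa using add_right_cancel h)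
  · rcases hrel with h | h
    · subst h; exact hone _
    · exact h.elim
  · exact hrel.elim (·.elim) (·.elim)
  · rcases hrel with h | h
    · exact h.elim
    · subst h; exact fun h => hone _ h.symm
  · exact hrel.elim (·.elim) (·.elim)
  · have hij : G.Adj i j := by tauto
    exact c.valid hij
  · exact hrel.elim (·.elim) (·.elim)
  · have hij : G.Adj j i := by tauto
    exact (c.valid hij).symm
  · have hij : G.Adj i j := by tauto
    exact c.valid hij

theorem federico_chromaticNumber {V : Type*} [Fintype V] [Nontrivial V]
    (G : SimpleGraph V) (hc : G.Connected) :
    (federico G).chromaticNumber = G.chromaticNumber := by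
  have hedge : ∃ x y, G.Adj x y := by
    obtain ⟨x, y, hne⟩ := exists_pair_ne V
    obtain ⟨w⟩ := hc x y
    cases w with
    | nil => exact absurd rfl hne
    | cons h _ => exact ⟨_, _, h⟩
  refine le_antisymm ?_ ?_
  · exact SimpleGraph.chromaticNumber_le_of_forall_imp
      (fun n hn => federico_aux_colorable hedge hn)
  · refine SimpleGraph.chromaticNumber_le_of_forall_imp (fun n hn => ?_)
    obtain ⟨C⟩ := hn
    refine ⟨SimpleGraph.Coloring.mk (fun v => C (Sum.inl v)) ?_⟩
    intro i j hij
    refine C.valid ?_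
    simp only [federico, SimpleGraph.fromRel_adj]
    exact ⟨fun h => hij.ne (Sum.inl.inj h), Or.inl hij⟩
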